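/- Let (X,d) be a metric space, μ a Borel measure on X, n > 0, c₄ > 0, with μ(B(x,r)) ≤ c₄ r^n for every x ∈ X and r > 0. Let 0 < α ≤ 1 and A > 0, and for each t > 0 let K_t : X × X → ℂ be measurable with ∫_X K_t(x,y) dμ(y) = 0 for every x ∈ X and |K_t(x,y)| ≤ A t^{-n}(1 + d(x,y)/t)^{-n-1-α} for all x, y ∈ X. If F : X → ℂ is Hölder continuous with exponent α, i.e. |F(x) − F(y)| ≤ H·d(x,y)^α for all x,y, then there is a constant C (depending only on A, H, c₄, n, α) such that |∫_X F(y) K_t(x,y) dμ(y)| ≤ C t^α for all x ∈ X and t > 0. -/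

import Mathlib

open MeasureTheory

lemma annuli_bound (X : Type) [MetricSpace X] [MeasurableSpace X] [BorelSpace X]
    (μ : Measure X) (n c₄ : ℝ) (hn : 0 < n) (hc₄ : 0 < c₄)
    (hball : ∀ (x : X) (r : ℝ), 0 < r → μ (Metric.ball x r) ≤ ENNReal.ofReal (c₄ * r ^ n))
    (x : X) (t : ℝ) (ht : 0 < t) :
    ∫⁻ y, ENNReal.ofReal ((1 + dist x y / t) ^ (-(n + 1))) ∂μ
      ≤ ENNReal.ofReal (c₄ * (1 + 2 ^ (n + 1)) * t ^ n) := by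
  have h2 : (0:ℝ) < 2 := by norm_num
  set f : X → ENNReal := fun y => ENNReal.ofReal ((1 + dist x y / t) ^ (-(n + 1))) with hf
  have hbase : ∀ y : X, (1:ℝ) ≤ 1 + dist x y / t := fun y => by
    have : 0 ≤ dist x y / t := div_nonneg dist_nonneg ht.le
    linarith
  set D : ℕ → Set X := fun k => Metric.ball x (2 ^ (k + 1) * t) \ Metric.ball x (2 ^ k * t)
    with hD
  have hcover : (Set.univ : Set X) ⊆ Metric.ball x t ∪ ⋃ k, D k := by
    intro y _
    obtain ⟨k, hk⟩ := pow_unbounded_of_one_lt (dist x y / t) (by norm_num : (1:ℝ) < 2)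
    have hk' : dist x y < 2 ^ k * t := by
      rw [div_lt_iff₀ ht] at hk; linarith
    clear hk
    induction k with
    | zero => left; simpa [Metric.mem_ball, dist_comm] using hk'
    | succ k ih =>
      by_cases hc : dist x y < 2 ^ k * t
      · exact ih hc
      · right
        refine Set.mem_iUnion.mpr ⟨k, ?_, ?_⟩
        · exact Metric.mem_ball'.mpr hk'
        · intro hmem
          exact hc (Metric.mem_ball'.mp hmem)
  -- bound on ball
  have hball0 : ∫⁻ y in Metric.ball x t, f y ∂μ ≤ ENNReal.ofReal (c₄ * t ^ n) := by
    calc ∫⁻ y in Metric.ball x t, f y ∂μ ≤ ∫⁻ _ in Metric.ball x t, 1 ∂μ := by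
          refine setLIntegral_mono measurable_const fun y _ => ?_
          simp only [hf]
          exact ENNReal.ofReal_le_one.mpr
            (Real.rpow_le_one_of_one_le_of_nonpos (hbase y) (by linarith))
      _ = μ (Metric.ball x t) := by simp
      _ ≤ ENNReal.ofReal (c₄ * t ^ n) := hball x t ht
  -- bound on annuli
  have hDk : ∀ k : ℕ, ∫⁻ y in D k, f y ∂μ
      ≤ ENNReal.ofReal (c₄ * 2 ^ n * t ^ n * (1/2 : ℝ) ^ k) := by
    intro k
    have hpow : (0:ℝ) < 2 ^ k := by positivity
    have hfb : ∀ y ∈ D k, f y ≤ ENNReal.ofReal (((2:ℝ) ^ k) ^ (-(n+1))) := by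
      intro y hy
      have hd : 2 ^ k * t ≤ dist x y := by
        have := hy.2
        rw [Metric.mem_ball'] at this
        exact le_of_not_gt this
      have : (2:ℝ) ^ k ≤ 1 + dist x y / t := by
        have : (2:ℝ) ^ k ≤ dist x y / t := (le_div_iff₀ ht).mpr hd
        linarith
      exact ENNReal.ofReal_le_ofReal
        (Real.rpow_le_rpow_of_nonpos hpow this (by linarith))
    calc ∫⁻ y in D k, f y ∂μ
        ≤ ∫⁻ _ in D k, ENNReal.ofReal (((2:ℝ) ^ k) ^ (-(n+1))) ∂μ :=
          setLIntegral_mono measurable_const hfb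
      _ = ENNReal.ofReal (((2:ℝ) ^ k) ^ (-(n+1))) * μ (D k) := setLIntegral_const _ _
      _ ≤ ENNReal.ofReal (((2:ℝ) ^ k) ^ (-(n+1))) * ENNReal.ofReal (c₄ * (2 ^ (k+1) * t) ^ n) := by
          refine mul_le_mul_right ?_ _
          refine le_trans (measure_mono Set.diff_subset) (hball x _ (by positivity))
      _ = ENNReal.ofReal (((2:ℝ) ^ k) ^ (-(n+1)) * (c₄ * (2 ^ (k+1) * t) ^ n)) := by
          rw [← ENNReal.ofReal_mul (by positivity)]
      _ = ENNReal.ofReal (c₄ * 2 ^ n * t ^ n * (1/2 : ℝ) ^ k) := by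
          congr 1
          have e1 : ((2:ℝ) ^ k) ^ (-(n+1)) = (2:ℝ) ^ ((k:ℝ) * (-(n+1))) := by
            rw [← Real.rpow_natCast 2 k, ← Real.rpow_mul (by norm_num)]
          have e2 : ((2:ℝ) ^ (k+1) * t) ^ n = (2:ℝ) ^ (((k:ℝ)+1) * n) * t ^ n := by
            rw [Real.mul_rpow (by positivity) ht.le, ← Real.rpow_natCast 2 (k+1),
              ← Real.rpow_mul (by norm_num)]
            push_cast; ring_nf
          have e3 : ((1:ℝ)/2) ^ k = (2:ℝ) ^ (-(k:ℝ)) := by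
            rw [Real.rpow_neg (by norm_num), Real.rpow_natCast]
            simp [one_div, inv_pow]
          have e4 : (2:ℝ) ^ ((k:ℝ) * -(n+1)) * 2 ^ (((k:ℝ)+1) * n) = 2 ^ n * 2 ^ (-(k:ℝ)) := by
            rw [← Real.rpow_add h2, ← Real.rpow_add h2]
            ring_nf
          rw [e1, e2, e3]
          linear_combination (c₄ * t ^ n) * e4
  have htwo : ENNReal.ofReal ((1:ℝ)/2) = 2⁻¹ := by
    rw [one_div, ENNReal.ofReal_inv_of_pos (by norm_num)]
    norm_num
  calc ∫⁻ y, f y ∂μ = ∫⁻ y in Set.univ, f y ∂μ := (setLIntegral_univ _).symm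
    _ ≤ ∫⁻ y in Metric.ball x t ∪ ⋃ k, D k, f y ∂μ := lintegral_mono_set hcover
    _ ≤ ∫⁻ y in Metric.ball x t, f y ∂μ + ∫⁻ y in ⋃ k, D k, f y ∂μ :=
        lintegral_union_le _ _ _
    _ ≤ ENNReal.ofReal (c₄ * t ^ n) + ∑' k, ∫⁻ y in D k, f y ∂μ :=
        add_le_add hball0 (lintegral_iUnion_le _ _)
    _ ≤ ENNReal.ofReal (c₄ * t ^ n)
          + ∑' k, ENNReal.ofReal (c₄ * 2 ^ n * t ^ n * (1/2 : ℝ) ^ k) :=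
        add_le_add_right (ENNReal.tsum_le_tsum hDk) _
    _ = ENNReal.ofReal (c₄ * t ^ n) + ENNReal.ofReal (c₄ * 2 ^ n * t ^ n) * 2 := by
        congr 1
        have hrw : ∀ k : ℕ, ENNReal.ofReal (c₄ * 2 ^ n * t ^ n * (1/2 : ℝ) ^ k)
            = ENNReal.ofReal (c₄ * 2 ^ n * t ^ n) * (ENNReal.ofReal ((1:ℝ)/2)) ^ k := by
          intro k
          rw [ENNReal.ofReal_mul (by positivity), ENNReal.ofReal_pow (by norm_num)]
        simp_rw [hrw]
        rw [ENNReal.tsum_mul_left, ENNReal.tsum_geometric, htwo,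
          ENNReal.one_sub_inv_two, inv_inv]
    _ = ENNReal.ofReal (c₄ * (1 + 2 ^ (n + 1)) * t ^ n) := by
        rw [show (2 : ENNReal) = ENNReal.ofReal (2:ℝ) by norm_num,
          ← ENNReal.ofReal_mul (by positivity), ← ENNReal.ofReal_add (by positivity)
            (by positivity)]
        congr 1
        have : (2:ℝ) ^ (n + 1) = 2 ^ n * 2 := by
          rw [Real.rpow_add h2, Real.rpow_one]
        linear_combination (-(t ^ n * c₄)) * this


/-- Hölder continuity implies decay of the wavelet transform: on a metric measure space
with upper Ahlfors regularity `μ(B(x,r)) ≤ c₄ rⁿ`, if `K_t` satisfies `∫ K_t(x,y)dμ(y)=0`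
and `|K_t(x,y)| ≤ A t^{-n}(1+d(x,y)/t)^{-n-1-α}`, and `F` is Hölder continuous with
exponent `α` and constant `H`, then `|∫ F(y) K_t(x,y) dμ(y)| ≤ C t^α` with `C`
depending only on `A`, `H`, `c₄`, `n`, `α`. -/
theorem stmt12 (n c₄ α A H : ℝ) (hn : 0 < n) (hc₄ : 0 < c₄)
    (hα : 0 < α) (hα1 : α ≤ 1) (hA : 0 < A) (hH : 0 < H) :
    ∃ C : ℝ, 0 < C ∧
      ∀ (X : Type) [MetricSpace X] [MeasurableSpace X] [BorelSpace X]
        (μ : Measure X) (K : ℝ → X → X → ℂ) (F : X → ℂ),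
        (∀ (x : X) (r : ℝ), 0 < r → μ (Metric.ball x r) ≤ ENNReal.ofReal (c₄ * r ^ n)) →
        (∀ t : ℝ, 0 < t → Measurable (Function.uncurry (K t))) →
        (∀ t : ℝ, 0 < t → ∀ x : X, ∫ y, K t x y ∂μ = 0) →
        (∀ t : ℝ, 0 < t → ∀ x y : X,
          ‖K t x y‖ ≤ A * t ^ (-n) * (1 + dist x y / t) ^ (-(n + 1 + α))) →
        Measurable F →
        (∀ x y : X, ‖F x - F y‖ ≤ H * dist x y ^ α) →
        ∀ (x : X) (t : ℝ), 0 < t →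
          ‖∫ y, F y * K t x y ∂μ‖ ≤ C * t ^ α := by
  refine ⟨A * H * (c₄ * (1 + 2 ^ (n + 1))), by positivity, ?_⟩
  intro X _ _ _ μ K F hball hKmeas hKzero hKbd hFmeas hFhold x t ht
  set C : ℝ := A * H * (c₄ * (1 + 2 ^ (n + 1))) with hC
  have hCt : 0 < C * t ^ α := by positivity
  set G : X → ℂ := fun y => (F y - F x) * K t x y with hG
  have hKx : Measurable (fun y => K t x y) := (hKmeas t ht).of_uncurry_left
  have hGmeas : Measurable G := ((hFmeas.sub measurable_const).mul hKx)
  -- pointwise bound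
  have hpt : ∀ y : X, ‖G y‖ ≤ (A * H * (t ^ α * t ^ (-n)))
      * (1 + dist x y / t) ^ (-(n + 1)) := by
    intro y
    have hbase : (1:ℝ) ≤ 1 + dist x y / t := by
      have : 0 ≤ dist x y / t := div_nonneg dist_nonneg ht.le
      linarith
    have hb0 : (0:ℝ) < 1 + dist x y / t := by linarith
    have h1 : ‖F y - F x‖ ≤ H * dist x y ^ α := by
      simpa [dist_comm] using hFhold y x
    have h2 : dist x y ^ α ≤ t ^ α * (1 + dist x y / t) ^ α := by
      rw [← Real.mul_rpow ht.le hb0.le]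
      refine Real.rpow_le_rpow dist_nonneg ?_ hα.le
      rw [mul_add, mul_one, mul_div_cancel₀ _ (ne_of_gt ht)]
      linarith
    have h3 : (1 + dist x y / t) ^ α * (1 + dist x y / t) ^ (-(n + 1 + α))
        = (1 + dist x y / t) ^ (-(n + 1)) := by
      rw [← Real.rpow_add hb0]
      ring_nf
    calc ‖G y‖ = ‖F y - F x‖ * ‖K t x y‖ := norm_mul _ _
      _ ≤ (H * dist x y ^ α) * (A * t ^ (-n) * (1 + dist x y / t) ^ (-(n + 1 + α))) := by
          refine mul_le_mul h1 (hKbd t ht x y) (norm_nonneg _) (by positivity)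
      _ ≤ (H * (t ^ α * (1 + dist x y / t) ^ α))
            * (A * t ^ (-n) * (1 + dist x y / t) ^ (-(n + 1 + α))) := by
          refine mul_le_mul_of_nonneg_right (by nlinarith [h2]) (by positivity)
      _ = (A * H * (t ^ α * t ^ (-n)))
            * ((1 + dist x y / t) ^ α * (1 + dist x y / t) ^ (-(n + 1 + α))) := by ring
      _ = (A * H * (t ^ α * t ^ (-n))) * (1 + dist x y / t) ^ (-(n + 1)) := by rw [h3]
  -- lintegral bound
  have hlin : ∫⁻ y, ENNReal.ofReal ‖G y‖ ∂μ ≤ ENNReal.ofReal (C * t ^ α) := by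
    calc ∫⁻ y, ENNReal.ofReal ‖G y‖ ∂μ
        ≤ ∫⁻ y, ENNReal.ofReal (A * H * (t ^ α * t ^ (-n)))
            * ENNReal.ofReal ((1 + dist x y / t) ^ (-(n + 1))) ∂μ := by
          refine lintegral_mono fun y => ?_
          rw [← ENNReal.ofReal_mul (by positivity)]
          exact ENNReal.ofReal_le_ofReal (hpt y)
      _ = ENNReal.ofReal (A * H * (t ^ α * t ^ (-n)))
            * ∫⁻ y, ENNReal.ofReal ((1 + dist x y / t) ^ (-(n + 1))) ∂μ := by
          rw [lintegral_const_mul]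
          refine Measurable.ennreal_ofReal ?_
          have hc : Continuous fun y : X => (1 + dist x y / t) ^ (-(n + 1)) := by
            refine Continuous.rpow_const ?_ fun y => Or.inl ?_
            · exact (continuous_const.add ((continuous_const.dist continuous_id).div_const t))
            · have : 0 ≤ dist x y / t := div_nonneg dist_nonneg ht.le
              positivity
          exact hc.measurable
      _ ≤ ENNReal.ofReal (A * H * (t ^ α * t ^ (-n)))
            * ENNReal.ofReal (c₄ * (1 + 2 ^ (n + 1)) * t ^ n) :=
          mul_le_mul_right (annuli_bound X μ n c₄ hn hc₄ hball x t ht) _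
      _ = ENNReal.ofReal (C * t ^ α) := by
          rw [← ENNReal.ofReal_mul (by positivity)]
          congr 1
          have h4 : t ^ (-n) * t ^ n = 1 := by
            rw [← Real.rpow_add ht]; simp
          rw [hC]
          linear_combination (A * H * t ^ α * (c₄ * (1 + 2 ^ (n+1)))) * h4
  -- integrability of G
  have hGint : Integrable G μ := by
    refine ⟨hGmeas.aestronglyMeasurable, ?_⟩
    rw [hasFiniteIntegral_iff_norm]
    exact lt_of_le_of_lt hlin ENNReal.ofReal_lt_top
  -- key bound on ∫ G
  have key : ‖∫ y, G y ∂μ‖ ≤ C * t ^ α := by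
    calc ‖∫ y, G y ∂μ‖ ≤ (∫⁻ y, ENNReal.ofReal ‖G y‖ ∂μ).toReal :=
          norm_integral_le_lintegral_norm _
      _ ≤ (ENNReal.ofReal (C * t ^ α)).toReal :=
          ENNReal.toReal_mono ENNReal.ofReal_ne_top hlin
      _ = C * t ^ α := ENNReal.toReal_ofReal hCt.le
  by_cases hint : Integrable (fun y => F y * K t x y) μ
  · by_cases hx0 : F x = 0
    · have : (fun y => F y * K t x y) = G := by
        funext y; simp [hG, hx0]
      rw [this]; exact key
    · have h1 : Integrable (fun y => F x * K t x y) μ := by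
        have := hint.sub hGint
        refine this.congr (Filter.Eventually.of_forall fun y => ?_)
        simp [hG]; ring
      have hKint : Integrable (fun y => K t x y) μ :=
        (integrable_const_mul_iff (isUnit_iff_ne_zero.mpr hx0) _).mp h1
      have hsplit : ∫ y, F y * K t x y ∂μ = ∫ y, G y ∂μ + F x * ∫ y, K t x y ∂μ := by
        rw [← integral_const_mul, ← integral_add hGint h1]
        congr 1; funext y; simp [hG]; ring
      rw [hsplit, hKzero t ht x, mul_zero, add_zero]
      exact key
  · rw [integral_undef hint]
    simpa using hCt.le
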